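/- Let 𝒯 be a hierarchy on a finite set V, let S₀ ⊆ V, and let p_adj^{C,(b)} : Ω → [0,1] (C ∈ 𝒯, b = 1,…,B) be random variables on a probability space (Ω, ℱ, ℙ). Assume there is a measurable event A with ℙ(A) ≥ (1−δ)^B (where δ ∈ (0,1)) such that for every b ∈ {1,…,B} and every t ∈ (0,1), ∑_{C ∈ 𝒯̃₀} ℙ({p_adj^{C,(b)} ≤ t} ∩ A) ≤ t. Then for every fixed γ ∈ (0,1) and every significance level α ∈ (0,1), the hierarchically adjusted aggregated p-values Q_h^C(γ) control the familywise error rate: ℙ(∃ C ∈ 𝒯₀ with Q_h^C(γ) ≤ α) ≤ α + 1 − (1−δ)^B ≤ α + Bδ. -/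

import Mathlib

open MeasureTheory Finset

/-- A hierarchy on a finite set `V`: a finite collection of nonempty subsets of `V`
containing `V` itself, such that any two members are nested or disjoint. -/
def IsHierarchy {ι : Type*} [DecidableEq ι] (V : Finset ι) (𝒯 : Finset (Finset ι)) : Prop :=
  V ∈ 𝒯 ∧ (∀ C ∈ 𝒯, C.Nonempty ∧ C ⊆ V) ∧
    ∀ C ∈ 𝒯, ∀ D ∈ 𝒯, C ⊆ D ∨ D ⊆ C ∨ C ∩ D = ∅

/-- The null clusters: members of the hierarchy not meeting the active set `S₀`. -/
def nullClusters {ι : Type*} [DecidableEq ι] (𝒯 : Finset (Finset ι)) (S₀ : Finset ι) :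
    Finset (Finset ι) :=
  𝒯.filter (fun C => C ∩ S₀ = ∅)

/-- The maximal null clusters: null clusters which are not strictly contained
in another null cluster. -/
def maxNullClusters {ι : Type*} [DecidableEq ι] (𝒯 : Finset (Finset ι)) (S₀ : Finset ι) :
    Finset (Finset ι) :=
  (nullClusters 𝒯 S₀).filter (fun C => ∀ D ∈ nullClusters 𝒯 S₀, ¬ C ⊂ D)

/-- The empirical `γ`-quantile of `a 1, …, a B`: the `⌈γ B⌉`-th smallest of the values. -/
noncomputable def empQuantile (γ : ℝ) {B : ℕ} (a : Fin B → ℝ) : ℝ :=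
  sInf {x : ℝ | ⌈γ * B⌉₊ ≤ (Finset.univ.filter (fun b => a b ≤ x)).card}

/-- The aggregated p-value `Q^C(γ) = min (1, q_γ({p_adj^{C,(b)}/γ}))`. -/
noncomputable def Qagg {ι : Type*} {Ω : Type*} {B : ℕ}
    (p : Finset ι → Fin B → Ω → ℝ) (γ : ℝ) (C : Finset ι) (ω : Ω) : ℝ :=
  min 1 (empQuantile γ (fun b => p C b ω / γ))

/-- The hierarchically adjusted aggregated p-value
`Q_h^C(γ) = max {Q^D(γ) : D ∈ 𝒯, C ⊆ D}` (for `C ∈ 𝒯`). -/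
noncomputable def Qhier {ι : Type*} [DecidableEq ι] {Ω : Type*} {B : ℕ}
    (𝒯 : Finset (Finset ι)) (p : Finset ι → Fin B → Ω → ℝ) (γ : ℝ)
    (C : Finset ι) (ω : Ω) : ℝ :=
  (insert C (𝒯.filter (fun D => C ⊆ D))).sup' (Finset.insert_nonempty _ _)
    (fun D => Qagg p γ D ω)

/-- **FWER control of the hierarchically adjusted aggregated p-values `Q_h^C(γ)`**
(Theorem 1, part 1, of Mandozzi–Bühlmann). -/
theorem fwer_control_Qhier
    {ι : Type*} [DecidableEq ι] {Ω : Type*} [MeasurableSpace Ω]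
    (ℙ : Measure Ω) [IsProbabilityMeasure ℙ]
    (V S₀ : Finset ι) (𝒯 : Finset (Finset ι))
    (h𝒯 : IsHierarchy V 𝒯) (hS₀ : S₀ ⊆ V)
    {B : ℕ} (hB : 1 ≤ B) (p : Finset ι → Fin B → Ω → ℝ)
    (hmeas : ∀ C ∈ 𝒯, ∀ b : Fin B, Measurable (p C b))
    (hp01 : ∀ C ∈ 𝒯, ∀ (b : Fin B) (ω : Ω), p C b ω ∈ Set.Icc (0 : ℝ) 1)
    {δ : ℝ} (hδ : δ ∈ Set.Ioo (0 : ℝ) 1)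
    (A : Set Ω) (hA : MeasurableSet A)
    (hPA : ENNReal.ofReal ((1 - δ) ^ B) ≤ ℙ A)
    (hsuper : ∀ b : Fin B, ∀ t ∈ Set.Ioo (0 : ℝ) 1,
      ∑ C ∈ maxNullClusters 𝒯 S₀, ℙ ({ω | p C b ω ≤ t} ∩ A) ≤ ENNReal.ofReal t)
    {γ α : ℝ} (hγ : γ ∈ Set.Ioo (0 : ℝ) 1) (hα : α ∈ Set.Ioo (0 : ℝ) 1) :
    ℙ {ω | ∃ C ∈ nullClusters 𝒯 S₀, Qhier 𝒯 p γ C ω ≤ α}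
        ≤ ENNReal.ofReal (α + 1 - (1 - δ) ^ B)
      ∧ α + 1 - (1 - δ) ^ B ≤ α + B * δ := by
  classical
  obtain ⟨hγ0, hγ1⟩ := hγ
  obtain ⟨hα0, hα1⟩ := hα
  obtain ⟨hδ0, hδ1⟩ := hδ
  have hBpos : (0:ℝ) < B := by exact_mod_cast hB
  set k := ⌈γ * B⌉₊ with hkdef
  set t := γ * α with htdef
  have ht0 : 0 < t := mul_pos hγ0 hα0
  have ht1 : t < 1 := by nlinarith
  have hk1 : 1 ≤ k := Nat.one_le_ceil_iff.mpr (mul_pos hγ0 hBpos)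
  have hkB : γ * B ≤ (k:ℝ) := Nat.le_ceil _
  -- Step 1 : quantile fact
  have hquant : ∀ D ∈ 𝒯, ∀ ω, Qagg p γ D ω ≤ α →
      k ≤ (Finset.univ.filter (fun b => p D b ω ≤ t)).card := by
    intro D hD ω hQ
    set a : Fin B → ℝ := fun b => p D b ω / γ with ha
    unfold Qagg at hQ
    have hq : empQuantile γ a ≤ α := by
      rcases min_le_iff.mp hQ with h | h
      · linarith
      · exact h
    unfold empQuantile at hq
    set S : Set ℝ := {x : ℝ | k ≤ (Finset.univ.filter (fun b => a b ≤ x)).card} with hS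
    have hSne : S.Nonempty := by
      refine ⟨1/γ, ?_⟩
      have hfil : (Finset.univ.filter (fun b => a b ≤ 1/γ)) = Finset.univ := by
        apply Finset.filter_true_of_mem
        intro b _
        have := (hp01 D hD b ω).2
        have := (hp01 D hD b ω).1
        rw [ha]
        simp only
        rw [div_le_div_iff₀ hγ0 hγ0]
        nlinarith
      simp only [hS, Set.mem_setOf_eq, hfil, Finset.card_univ, Fintype.card_fin]
      exact Nat.ceil_le.mpr (by nlinarith)
    -- choose y₀ > α such that a b ≤ y₀ → p D b ω ≤ t
    set F := Finset.univ.filter (fun b => t < p D b ω) with hF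
    obtain ⟨y₀, hy₀α, hy₀⟩ : ∃ y₀ : ℝ, α < y₀ ∧ ∀ b : Fin B, a b ≤ y₀ → p D b ω ≤ t := by
      by_cases hFne : F.Nonempty
      · obtain ⟨b₀, hb₀F, hb₀min⟩ := F.exists_min_image (fun b => p D b ω) hFne
        set m := p D b₀ ω with hm
        have htm : t < m := (Finset.mem_filter.mp hb₀F).2
        have hαm : α < m / γ := by
          rw [lt_div_iff₀ hγ0]; nlinarith
        refine ⟨(α + m/γ)/2, by linarith, ?_⟩
        intro b hb
        by_contra hbt
        push_neg at hbt
        have hbF : b ∈ F := Finset.mem_filter.mpr ⟨Finset.mem_univ _, hbt⟩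
        have hmb : m ≤ p D b ω := hb₀min b hbF
        have : p D b ω / γ ≤ (α + m/γ)/2 := hb
        have h2 : m / γ ≤ p D b ω / γ := by gcongr
        linarith
      · refine ⟨α + 1, by linarith, ?_⟩
        intro b _
        by_contra hbt
        push_neg at hbt
        exact hFne ⟨b, Finset.mem_filter.mpr ⟨Finset.mem_univ _, hbt⟩⟩
    obtain ⟨x, hxS, hxy⟩ := exists_lt_of_csInf_lt hSne (lt_of_le_of_lt hq hy₀α)
    calc k ≤ (Finset.univ.filter (fun b => a b ≤ x)).card := hxS
      _ ≤ (Finset.univ.filter (fun b => p D b ω ≤ t)).card := by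
          apply Finset.card_le_card
          intro b hb
          rw [Finset.mem_filter] at hb ⊢
          exact ⟨hb.1, hy₀ b (le_trans hb.2 (le_of_lt hxy))⟩
  -- Step 2 : every null cluster is contained in a maximal null cluster
  have hmax : ∀ C ∈ nullClusters 𝒯 S₀, ∃ D ∈ maxNullClusters 𝒯 S₀, C ⊆ D := by
    intro C hC
    obtain ⟨D, hDmem, hDmax⟩ := Finset.exists_max_image
      ((nullClusters 𝒯 S₀).filter (fun D => C ⊆ D)) Finset.card
      ⟨C, Finset.mem_filter.mpr ⟨hC, Finset.Subset.refl C⟩⟩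
    rw [Finset.mem_filter] at hDmem
    refine ⟨D, ?_, hDmem.2⟩
    rw [maxNullClusters, Finset.mem_filter]
    refine ⟨hDmem.1, ?_⟩
    intro D' hD' hDD'
    have hD'mem : D' ∈ (nullClusters 𝒯 S₀).filter (fun E => C ⊆ E) :=
      Finset.mem_filter.mpr ⟨hD', hDmem.2.trans hDD'.subset⟩
    have := hDmax D' hD'mem
    exact absurd this (not_le.mpr (Finset.card_lt_card hDD'))
  -- events E_D
  set E : Finset ι → Set Ω := fun D => {ω | k ≤ (Finset.univ.filter (fun b => p D b ω ≤ t)).card} with hE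
  -- inclusion of the FWER event
  have hincl : {ω | ∃ C ∈ nullClusters 𝒯 S₀, Qhier 𝒯 p γ C ω ≤ α} ⊆
      ⋃ D ∈ maxNullClusters 𝒯 S₀, E D := by
    rintro ω ⟨C, hC, hQ⟩
    obtain ⟨D, hDmax, hCD⟩ := hmax C hC
    have hD𝒯 : D ∈ 𝒯 := by
      have := (Finset.mem_filter.mp hDmax).1
      exact (Finset.mem_filter.mp this).1
    have hQD : Qagg p γ D ω ≤ α := by
      refine le_trans ?_ hQ
      unfold Qhier
      have hmem : D ∈ insert C (𝒯.filter (fun D' => C ⊆ D')) :=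
        Finset.mem_insert_of_mem (Finset.mem_filter.mpr ⟨hD𝒯, hCD⟩)
      exact Finset.le_sup' (fun D' => Qagg p γ D' ω) hmem
    exact Set.mem_biUnion hDmax (hquant D hD𝒯 ω hQD)
  -- Markov step
  have hmarkov : ∀ D ∈ maxNullClusters 𝒯 S₀,
      (k : ENNReal) * ℙ (E D ∩ A) ≤ ∑ b : Fin B, ℙ ({ω | p D b ω ≤ t} ∩ A) := by
    intro D hDmax
    have hD𝒯 : D ∈ 𝒯 := by
      have := (Finset.mem_filter.mp hDmax).1
      exact (Finset.mem_filter.mp this).1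
    have hSmeas : ∀ b : Fin B, MeasurableSet {ω | p D b ω ≤ t} :=
      fun b => measurableSet_le (hmeas D hD𝒯 b) measurable_const
    set g : Ω → ENNReal := fun ω =>
      ∑ b : Fin B, ({ω' | p D b ω' ≤ t}.indicator (fun _ => (1:ENNReal)) ω) with hg
    have hgmeas : Measurable g :=
      Finset.measurable_sum _ (fun b _ => Measurable.indicator measurable_const (hSmeas b))
    have hgval : ∀ ω, g ω = ((Finset.univ.filter (fun b => p D b ω ≤ t)).card : ENNReal) := by
      intro ω
      rw [hg, Finset.card_filter]
      push_cast
      apply Finset.sum_congr rfl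
      intro b _
      by_cases h : p D b ω ≤ t <;> simp [Set.indicator_apply, h]
    have hEg : ∀ ω, ω ∈ E D ↔ (k : ENNReal) ≤ g ω := by
      intro ω
      rw [hgval ω, hE]
      simp only [Set.mem_setOf_eq]
      exact_mod_cast Iff.rfl
    calc (k : ENNReal) * ℙ (E D ∩ A)
        = ∫⁻ _ in E D ∩ A, (k : ENNReal) ∂ℙ := (setLIntegral_const _ _).symm
      _ ≤ ∫⁻ ω in E D ∩ A, g ω ∂ℙ := by
          apply setLIntegral_mono hgmeas
          intro ω hω
          exact (hEg ω).mp hω.1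
      _ ≤ ∫⁻ ω in A, g ω ∂ℙ := lintegral_mono_set Set.inter_subset_right
      _ = ∑ b : Fin B, ℙ ({ω | p D b ω ≤ t} ∩ A) := by
          rw [hg, lintegral_finset_sum _
            (fun b _ => Measurable.indicator measurable_const (hSmeas b))]
          apply Finset.sum_congr rfl
          intro b _
          rw [lintegral_indicator (hSmeas b), setLIntegral_one,
            Measure.restrict_apply (hSmeas b)]
  -- sum over maximal null clusters
  have hsum : ∑ D ∈ maxNullClusters 𝒯 S₀, ℙ (E D ∩ A) ≤ ENNReal.ofReal α := by
    have hk0 : ((k : ENNReal)) ≠ 0 := by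
      simp only [ne_eq, Nat.cast_eq_zero]
      omega
    have hmul : (k : ENNReal) * (∑ D ∈ maxNullClusters 𝒯 S₀, ℙ (E D ∩ A))
        ≤ (k : ENNReal) * ENNReal.ofReal α := by
      rw [Finset.mul_sum]
      calc ∑ D ∈ maxNullClusters 𝒯 S₀, (k : ENNReal) * ℙ (E D ∩ A)
          ≤ ∑ D ∈ maxNullClusters 𝒯 S₀, ∑ b : Fin B, ℙ ({ω | p D b ω ≤ t} ∩ A) :=
            Finset.sum_le_sum hmarkov
        _ = ∑ b : Fin B, ∑ D ∈ maxNullClusters 𝒯 S₀, ℙ ({ω | p D b ω ≤ t} ∩ A) :=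
            Finset.sum_comm
        _ ≤ ∑ _b : Fin B, ENNReal.ofReal t :=
            Finset.sum_le_sum (fun b _ => hsuper b t ⟨ht0, ht1⟩)
        _ = (B : ENNReal) * ENNReal.ofReal t := by
            rw [Finset.sum_const, Finset.card_univ, Fintype.card_fin, nsmul_eq_mul]
        _ ≤ (k : ENNReal) * ENNReal.ofReal α := by
            rw [show ((B : ℕ) : ENNReal) = ENNReal.ofReal (B : ℝ) by
                rw [ENNReal.ofReal_natCast],
              show ((k : ℕ) : ENNReal) = ENNReal.ofReal (k : ℝ) by
                rw [ENNReal.ofReal_natCast],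
              ← ENNReal.ofReal_mul (by positivity), ← ENNReal.ofReal_mul (by positivity)]
            apply ENNReal.ofReal_le_ofReal
            rw [htdef]
            nlinarith
    exact (ENNReal.mul_le_mul_iff_right hk0 (ENNReal.natCast_ne_top k)).mp hmul
  constructor
  · -- main FWER bound
    have hcompl : ℙ Aᶜ ≤ ENNReal.ofReal (1 - (1 - δ) ^ B) := by
      rw [measure_compl hA (measure_ne_top _ _), measure_univ]
      calc (1 : ENNReal) - ℙ A ≤ 1 - ENNReal.ofReal ((1 - δ) ^ B) := tsub_le_tsub_left hPA 1
        _ = ENNReal.ofReal (1 - (1 - δ) ^ B) := by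
            rw [ENNReal.ofReal_sub _ (pow_nonneg (by linarith) B), ENNReal.ofReal_one]
    calc ℙ {ω | ∃ C ∈ nullClusters 𝒯 S₀, Qhier 𝒯 p γ C ω ≤ α}
        ≤ ℙ ({ω | ∃ C ∈ nullClusters 𝒯 S₀, Qhier 𝒯 p γ C ω ≤ α} ∩ A)
            + ℙ ({ω | ∃ C ∈ nullClusters 𝒯 S₀, Qhier 𝒯 p γ C ω ≤ α} \ A) :=
          measure_le_inter_add_diff _ _ _
      _ ≤ ℙ (⋃ D ∈ maxNullClusters 𝒯 S₀, (E D ∩ A)) + ℙ Aᶜ := by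
          apply add_le_add
          · apply measure_mono
            intro ω hω
            obtain hU := hincl hω.1
            rw [Set.mem_iUnion₂] at hU ⊢
            obtain ⟨D, hD, hED⟩ := hU
            exact ⟨D, hD, hED, hω.2⟩
          · exact measure_mono (fun ω hω => hω.2)
      _ ≤ (∑ D ∈ maxNullClusters 𝒯 S₀, ℙ (E D ∩ A)) + ℙ Aᶜ := by
          apply add_le_add_left
          exact measure_biUnion_finset_le _ _
      _ ≤ ENNReal.ofReal α + ENNReal.ofReal (1 - (1 - δ) ^ B) := add_le_add hsum hcompl
      _ = ENNReal.ofReal (α + 1 - (1 - δ) ^ B) := by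
          rw [← ENNReal.ofReal_add (le_of_lt hα0)
            (by nlinarith [pow_le_one₀ (by linarith : (0:ℝ) ≤ 1 - δ) (by linarith : (1:ℝ) - δ ≤ 1) (n := B)])]
          ring_nf
  · -- Bernoulli
    have h := one_add_mul_le_pow (a := -δ) (by linarith) B
    rw [show (1:ℝ) + -δ = 1 - δ by ring] at h
    have : 1 - (B:ℝ) * δ ≤ (1 - δ) ^ B := by linarith
    linarith
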